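/- Let (Ω, 𝒜, P) be a probability space, let d, M, τ ≥ 1, G ≥ 0, η_prev ∈ ℝ, ε ∈ [0,1], q₁ ≥ 1, and let w_1, …, w_M be nonnegative reals with Σ_m w_m = 1. Let θ, θ̂, θ̂_prev : Ω → ℝ^d and g_{m,i} : Ω → ℝ^d (m ∈ {1,…,M}, i ∈ {1,…,τ}) be random vectors (all integrands appearing below integrable) such that: (i) θ = θ̂_prev − η_prev Σ_{m=1}^M w_m Σ_{i=1}^τ g_{m,i} P-almost surely; (ii) E[‖g_{m,i}‖²] ≤ G² for all m, i; (iii) E[θ̂] = E[θ]; and (iv) E[‖θ̂‖²] ≤ E[‖θ‖²] + (ε d/(4 q₁²)) · E[‖θ − θ̂_prev‖²]. Then for every θ* ∈ ℝ^d: E[‖θ̂ − θ*‖²] ≤ E[‖θ − θ*‖²] + (η_prev τ G/(2 q₁))² · ε d. -/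

import Mathlib

open MeasureTheory

lemma aux_weighted {E : Type*} [NormedAddCommGroup E] [InnerProductSpace ℝ E] {M : ℕ}
    (w : Fin M → ℝ) (hw : ∀ m, 0 ≤ w m) (hw1 : ∑ m, w m = 1) (v : Fin M → E) :
    ‖∑ m, w m • v m‖ ^ 2 ≤ ∑ m, w m * ‖v m‖ ^ 2 := by
  have h1 : ‖∑ m, w m • v m‖ ≤ ∑ m, w m * ‖v m‖ := by
    calc ‖∑ m, w m • v m‖ ≤ ∑ m, ‖w m • v m‖ := norm_sum_le _ _
    _ = ∑ m, w m * ‖v m‖ := by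
        refine Finset.sum_congr rfl fun m _ => ?_
        rw [norm_smul, Real.norm_eq_abs, abs_of_nonneg (hw m)]
  have h2 : (∑ m, w m * ‖v m‖) ^ 2 ≤ (∑ m, w m) * ∑ m, w m * ‖v m‖ ^ 2 := by
    have h := Finset.sum_mul_sq_le_sq_mul_sq Finset.univ
      (fun m => Real.sqrt (w m)) (fun m => Real.sqrt (w m) * ‖v m‖)
    calc (∑ m, w m * ‖v m‖) ^ 2
        = (∑ m, Real.sqrt (w m) * (Real.sqrt (w m) * ‖v m‖)) ^ 2 := by
          congr 1; refine Finset.sum_congr rfl fun m _ => ?_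
          rw [← mul_assoc, Real.mul_self_sqrt (hw m)]
      _ ≤ (∑ m, Real.sqrt (w m) ^ 2) * ∑ m, (Real.sqrt (w m) * ‖v m‖) ^ 2 := h
      _ = (∑ m, w m) * ∑ m, w m * ‖v m‖ ^ 2 := by
          congr 1
          · exact Finset.sum_congr rfl fun m _ => Real.sq_sqrt (hw m)
          · refine Finset.sum_congr rfl fun m _ => ?_
            rw [mul_pow, Real.sq_sqrt (hw m)]
  calc ‖∑ m, w m • v m‖ ^ 2 ≤ (∑ m, w m * ‖v m‖) ^ 2 :=
        pow_le_pow_left₀ (norm_nonneg _) h1 2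
    _ ≤ (∑ m, w m) * ∑ m, w m * ‖v m‖ ^ 2 := h2
    _ = ∑ m, w m * ‖v m‖ ^ 2 := by rw [hw1, one_mul]

lemma aux_cs {E : Type*} [NormedAddCommGroup E] {τ : ℕ} (u : Fin τ → E) :
    ‖∑ i, u i‖ ^ 2 ≤ (τ : ℝ) * ∑ i, ‖u i‖ ^ 2 := by
  have h1 : ‖∑ i, u i‖ ≤ ∑ i, ‖u i‖ := norm_sum_le _ _
  have h2 : (∑ i, ‖u i‖) ^ 2 ≤ (τ : ℝ) * ∑ i, ‖u i‖ ^ 2 := by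
    have h := Finset.sum_mul_sq_le_sq_mul_sq Finset.univ (fun _ : Fin τ => (1 : ℝ))
      (fun i => ‖u i‖)
    simpa using h
  calc ‖∑ i, u i‖ ^ 2 ≤ (∑ i, ‖u i‖) ^ 2 :=
        pow_le_pow_left₀ (norm_nonneg _) h1 2
    _ ≤ (τ : ℝ) * ∑ i, ‖u i‖ ^ 2 := h2

lemma aux_expand {Ω : Type*} [MeasurableSpace Ω] (P : Measure Ω) [IsProbabilityMeasure P]
    {d : ℕ} (f : Ω → EuclideanSpace ℝ (Fin d)) (hf : Integrable f P)
    (hf2 : Integrable (fun ω => ‖f ω‖ ^ 2) P) (c : EuclideanSpace ℝ (Fin d)) :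
    ∫ ω, ‖f ω - c‖ ^ 2 ∂P
      = ∫ ω, ‖f ω‖ ^ 2 ∂P - 2 * (inner ℝ c (∫ ω, f ω ∂P) : ℝ) + ‖c‖ ^ 2 := by
  have h1 : ∀ ω, ‖f ω - c‖ ^ 2 = ‖f ω‖ ^ 2 - 2 * (inner ℝ c (f ω) : ℝ) + ‖c‖ ^ 2 := by
    intro ω
    rw [norm_sub_sq_real, real_inner_comm]
  simp_rw [h1]
  rw [integral_add, integral_sub hf2, MeasureTheory.integral_const_mul, integral_inner hf,
    integral_const]
  · simp
  · exact hf.const_inner c |>.const_mul 2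
  · exact (hf2.sub ((hf.const_inner c).const_mul 2))
  · exact integrable_const _

/-- lemma bounding E‖θ̂ − θ*‖² via E‖θ − θ*‖² plus the quantization term. -/
theorem stmt_14 {Ω : Type*} [MeasurableSpace Ω] (P : Measure Ω) [IsProbabilityMeasure P]
    (d M τ : ℕ) (hd : 1 ≤ d) (hM : 1 ≤ M) (hτ : 1 ≤ τ)
    (G : ℝ) (hG : 0 ≤ G) (ηprev : ℝ)
    (ε : ℝ) (hε0 : 0 ≤ ε) (hε1 : ε ≤ 1)
    (q₁ : ℕ) (hq₁ : 1 ≤ q₁)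
    (w : Fin M → ℝ) (hw : ∀ m, 0 ≤ w m) (hw1 : ∑ m, w m = 1)
    (θ θh θhp : Ω → EuclideanSpace ℝ (Fin d))
    (g : Fin M → Fin τ → Ω → EuclideanSpace ℝ (Fin d))
    -- integrability of all integrands appearing below
    (hθint : Integrable θ P) (hθhint : Integrable θh P) (hθhpint : Integrable θhp P)
    (hθ2int : Integrable (fun ω => ‖θ ω‖ ^ 2) P)
    (hθh2int : Integrable (fun ω => ‖θh ω‖ ^ 2) P)
    (hdiff2int : Integrable (fun ω => ‖θ ω - θhp ω‖ ^ 2) P)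
    (hg2int : ∀ m i, Integrable (fun ω => ‖g m i ω‖ ^ 2) P)
    -- (i) the global model is obtained from the weighted local updates
    (hmodel : ∀ᵐ ω ∂P, θ ω = θhp ω - ηprev • ∑ m, w m • ∑ i, g m i ω)
    -- (ii) bounded second moments of the stochastic gradients
    (hgbound : ∀ m i, ∫ ω, ‖g m i ω‖ ^ 2 ∂P ≤ G ^ 2)
    -- (iii) unbiasedness of the quantized estimate
    (hmean : ∫ ω, θh ω ∂P = ∫ ω, θ ω ∂P)
    -- (iv) second-moment bound of the quantized estimate
    (hsec : ∫ ω, ‖θh ω‖ ^ 2 ∂P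
      ≤ ∫ ω, ‖θ ω‖ ^ 2 ∂P + ε * d / (4 * q₁ ^ 2) * ∫ ω, ‖θ ω - θhp ω‖ ^ 2 ∂P) :
    ∀ θstar : EuclideanSpace ℝ (Fin d),
      ∫ ω, ‖θh ω - θstar‖ ^ 2 ∂P
        ≤ ∫ ω, ‖θ ω - θstar‖ ^ 2 ∂P + (ηprev * τ * G / (2 * q₁)) ^ 2 * (ε * d) := by
  intro θstar
  have hq : (0 : ℝ) < q₁ := by exact_mod_cast hq₁
  set c : ℝ := ε * d / (4 * q₁ ^ 2) with hcdef
  have hc : 0 ≤ c := by positivity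
  -- Step 2: bound I = ∫ ‖θ - θhp‖²
  set I : ℝ := ∫ ω, ‖θ ω - θhp ω‖ ^ 2 ∂P with hIdef
  have hIbound : I ≤ ηprev ^ 2 * τ ^ 2 * G ^ 2 := by
    have hptwise : ∀ᵐ ω ∂P, ‖θ ω - θhp ω‖ ^ 2
        ≤ ηprev ^ 2 * ∑ m, w m * ((τ : ℝ) * ∑ i, ‖g m i ω‖ ^ 2) := by
      filter_upwards [hmodel] with ω hω
      have h0 : θ ω - θhp ω = -(ηprev • ∑ m, w m • ∑ i, g m i ω) := by
        rw [hω]; abel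
      rw [h0, norm_neg, norm_smul, mul_pow, Real.norm_eq_abs, sq_abs]
      refine mul_le_mul_of_nonneg_left ?_ (sq_nonneg _)
      calc ‖∑ m, w m • ∑ i, g m i ω‖ ^ 2
          ≤ ∑ m, w m * ‖∑ i, g m i ω‖ ^ 2 := aux_weighted w hw hw1 _
        _ ≤ ∑ m, w m * ((τ : ℝ) * ∑ i, ‖g m i ω‖ ^ 2) := by
            refine Finset.sum_le_sum fun m _ => ?_
            exact mul_le_mul_of_nonneg_left (aux_cs _) (hw m)
    have hmajint : Integrable
        (fun ω => ηprev ^ 2 * ∑ m, w m * ((τ : ℝ) * ∑ i, ‖g m i ω‖ ^ 2)) P := by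
      apply Integrable.const_mul
      apply integrable_finset_sum
      intro m _
      apply Integrable.const_mul
      apply Integrable.const_mul
      exact integrable_finset_sum _ fun i _ => hg2int m i
    calc I ≤ ∫ ω, ηprev ^ 2 * ∑ m, w m * ((τ : ℝ) * ∑ i, ‖g m i ω‖ ^ 2) ∂P :=
          integral_mono_ae hdiff2int hmajint hptwise
      _ = ηprev ^ 2 * ∑ m, w m * ((τ : ℝ) * ∑ i, ∫ ω, ‖g m i ω‖ ^ 2 ∂P) := by
          rw [MeasureTheory.integral_const_mul]
          congr 1
          rw [integral_finset_sum _ fun m _ => by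
            exact (((integrable_finset_sum _ fun i _ => hg2int m i).const_mul _).const_mul _)]
          refine Finset.sum_congr rfl fun m _ => ?_
          rw [MeasureTheory.integral_const_mul, MeasureTheory.integral_const_mul,
            integral_finset_sum _ fun i _ => hg2int m i]
      _ ≤ ηprev ^ 2 * ∑ m, w m * ((τ : ℝ) * ((τ : ℝ) * G ^ 2)) := by
          refine mul_le_mul_of_nonneg_left ?_ (sq_nonneg _)
          refine Finset.sum_le_sum fun m _ => ?_
          refine mul_le_mul_of_nonneg_left ?_ (hw m)
          refine mul_le_mul_of_nonneg_left ?_ (by positivity)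
          calc ∑ i, ∫ ω, ‖g m i ω‖ ^ 2 ∂P ≤ ∑ _i : Fin τ, G ^ 2 :=
                Finset.sum_le_sum fun i _ => hgbound m i
            _ = (τ : ℝ) * G ^ 2 := by simp [mul_comm]
      _ = ηprev ^ 2 * τ ^ 2 * G ^ 2 := by
          rw [← Finset.sum_mul, hw1]; ring
  -- Step 1: expand the squared norms
  have e1 := aux_expand P θh hθhint hθh2int θstar
  have e2 := aux_expand P θ hθint hθ2int θstar
  have key : ∫ ω, ‖θh ω - θstar‖ ^ 2 ∂P ≤ ∫ ω, ‖θ ω - θstar‖ ^ 2 ∂P + c * I := by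
    rw [e1, e2, hmean]
    linarith [hsec]
  refine key.trans ?_
  have harith : c * (ηprev ^ 2 * τ ^ 2 * G ^ 2)
      = (ηprev * τ * G / (2 * q₁)) ^ 2 * (ε * d) := by
    rw [hcdef]
    field_simp
    ring
  have : c * I ≤ (ηprev * τ * G / (2 * q₁)) ^ 2 * (ε * d) := by
    rw [← harith]
    exact mul_le_mul_of_nonneg_left hIbound hc
  linarith
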